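/- The iterated Burch ideals form a descending chain: defining BI^0(I) = n and BI^j(I) = nI : (I : BI^{j-1}(I)) for j ≥ 1, one has BI^j(I) ⊆ BI^{j-1}(I) for all j ≥ 1, provided BI^1(I) ⊆ n. -/
import Mathlib


/-- The iterated Burch ideals `BI^0(I) = n`, `BI^j(I) = nI : (I : BI^{j-1}(I))`
form a descending chain, provided `BI^1(I) ⊆ n`. -/
theorem iterated_burch_descending {S : Type*} [CommRing S] [IsLocalRing S] (I : Ideal S)
    (B : ℕ → Ideal S)
    (hB0 : B 0 = IsLocalRing.maximalIdeal S)
    (hBsucc : ∀ j : ℕ, B (j + 1) = (IsLocalRing.maximalIdeal S * I).colon (I.colon (B j)))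
    (hB1 : B 1 ≤ IsLocalRing.maximalIdeal S) :
    ∀ j : ℕ, 1 ≤ j → B j ≤ B (j - 1) := by
  have key : ∀ j : ℕ, B (j + 1) ≤ B j := by
    intro j
    induction j with
    | zero => rw [hB0]; exact hB1
    | succ k ih =>
      rw [hBsucc (k + 1), hBsucc k]
      exact Submodule.colon_mono le_rfl (Submodule.colon_mono le_rfl ((hBsucc k).ge.trans ih))
  intro j hj
  obtain ⟨k, rfl⟩ := Nat.exists_eq_add_of_le hj
  simpa [Nat.add_comm] using key k
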